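/- Let A ⊇ B be a Frobenius extension with Frobenius homomorphism E: A → B, dual bases x_i, y_i, such that [A:B]_E = Σ_i x_i y_i is invertible in Z(A). If the centralizer A^B equals Z(A), then the element [A:B]_E^{−1} Σ_i x_i ⊗_B y_i is the unique separability element of A over B. -/

import Mathlib

open scoped TensorProduct

section SepPrelude

variable {A : Type*} [Ring A]

/-- Relations defining `A ⊗_B A` as a quotient of `A ⊗_ℤ A`. -/
def sepRel (B : Subring A) : Submodule ℤ (TensorProduct ℤ A A) :=
  Submodule.span ℤ
    {z | ∃ (x y : A) (b : B), z = (x * (b : A)) ⊗ₜ[ℤ] y - x ⊗ₜ[ℤ] ((b : A) * y)}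

/-- The tensor product `A ⊗_B A` of `A` with itself over the subring `B`. -/
abbrev TensorOverSub (B : Subring A) : Type _ := TensorProduct ℤ A A ⧸ sepRel B

/-- The basic tensor `x ⊗_B y`. -/
noncomputable def tmulB (B : Subring A) (x y : A) : TensorOverSub B :=
  Submodule.Quotient.mk (x ⊗ₜ[ℤ] y)

/-- Left multiplication `a • (x ⊗ y) = (a*x) ⊗ y` on `A ⊗_B A`. -/
noncomputable def lmulB (B : Subring A) (a : A) :
    TensorOverSub B →ₗ[ℤ] TensorOverSub B :=
  Submodule.mapQ _ _ (LinearMap.rTensor A (LinearMap.mulLeft ℤ a)) (by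
    refine Submodule.span_le.mpr ?_
    rintro _ ⟨x, y, b, rfl⟩
    simp only [SetLike.mem_coe, Submodule.mem_comap, map_sub, LinearMap.rTensor_tmul,
      LinearMap.mulLeft_apply]
    exact Submodule.subset_span ⟨a * x, y, b, by
      erw [map_sub, LinearMap.rTensor_tmul, LinearMap.rTensor_tmul]
      simp only [LinearMap.mulLeft_apply, mul_assoc a x (b : A)]⟩)

/-- Right multiplication `(x ⊗ y) • a = x ⊗ (y*a)` on `A ⊗_B A`. -/
noncomputable def rmulB (B : Subring A) (a : A) :
    TensorOverSub B →ₗ[ℤ] TensorOverSub B :=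
  Submodule.mapQ _ _ (LinearMap.lTensor A (LinearMap.mulRight ℤ a)) (by
    refine Submodule.span_le.mpr ?_
    rintro _ ⟨x, y, b, rfl⟩
    simp only [SetLike.mem_coe, Submodule.mem_comap, map_sub, LinearMap.lTensor_tmul,
      LinearMap.mulRight_apply]
    exact Submodule.subset_span ⟨x, y * a, b, by
      erw [map_sub, LinearMap.lTensor_tmul, LinearMap.lTensor_tmul]
      simp only [LinearMap.mulRight_apply, mul_assoc]⟩)

/-- The multiplication map `μ : A ⊗_B A → A`. -/
noncomputable def mulMapB (B : Subring A) : TensorOverSub B →ₗ[ℤ] A :=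
  Submodule.liftQ _ (LinearMap.mul' ℤ A) (by
    refine Submodule.span_le.mpr ?_
    rintro _ ⟨x, y, b, rfl⟩
    erw [SetLike.mem_coe, LinearMap.mem_ker]
    erw [map_sub, LinearMap.mul'_apply, LinearMap.mul'_apply]
    simp [mul_assoc])

/-- `A` is a separable extension of `B`: there is a separability element in `A ⊗_B A`. -/
def IsSepExt (B : Subring A) : Prop :=
  ∃ e : TensorOverSub B, (∀ a : A, lmulB B a e = rmulB B a e) ∧ mulMapB B e = 1

end SepPrelude

section SepAux

variable {A : Type*} [Ring A] (B : Subring A)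

lemma tmulB_rel (x y : A) (b : B) : tmulB B (x * (b : A)) y = tmulB B x ((b : A) * y) := by
  rw [tmulB, tmulB, Submodule.Quotient.eq]
  exact Submodule.subset_span ⟨x, y, b, rfl⟩

lemma lmulB_tmulB (a x y : A) : lmulB B a (tmulB B x y) = tmulB B (a * x) y := by
  rw [lmulB, tmulB, tmulB]
  erw [Submodule.mapQ_apply]
  erw [LinearMap.rTensor_tmul]
  rfl

lemma rmulB_tmulB (a x y : A) : rmulB B a (tmulB B x y) = tmulB B x (y * a) := by
  rw [rmulB, tmulB, tmulB]
  erw [Submodule.mapQ_apply]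
  erw [LinearMap.lTensor_tmul]
  rfl

lemma mulMapB_tmulB (x y : A) : mulMapB B (tmulB B x y) = x * y := by
  rw [mulMapB, tmulB]
  erw [Submodule.liftQ_apply]
  erw [LinearMap.mul'_apply]

lemma tmulB_sum_left {ι : Type*} (s : Finset ι) (f : ι → A) (y : A) :
    tmulB B (∑ k ∈ s, f k) y = ∑ k ∈ s, tmulB B (f k) y := by
  simp only [tmulB, ← Submodule.mkQ_apply, TensorProduct.sum_tmul, map_sum]

lemma tmulB_sum_right {ι : Type*} (x : A) (s : Finset ι) (f : ι → A) :
    tmulB B x (∑ k ∈ s, f k) = ∑ k ∈ s, tmulB B x (f k) := by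
  simp only [tmulB, ← Submodule.mkQ_apply, TensorProduct.tmul_sum, map_sum]

/-- The map `x ⊗ y ↦ E(x) y` on `A ⊗_B A`. -/
noncomputable def psiB (E : A →+ B)
    (hEr : ∀ (a : A) (b : B), E (a * (b : A)) = E a * b) :
    TensorOverSub B →ₗ[ℤ] A :=
  Submodule.liftQ _
    (TensorProduct.lift ((LinearMap.mul ℤ A).comp
      ((B.subtype.toAddMonoidHom.toIntLinearMap).comp E.toIntLinearMap)))
    (by
      refine Submodule.span_le.mpr ?_
      rintro _ ⟨x, y, b, rfl⟩
      simp only [SetLike.mem_coe, LinearMap.mem_ker, map_sub, TensorProduct.lift.tmul,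
        LinearMap.comp_apply, AddMonoidHom.coe_toIntLinearMap, RingHom.toAddMonoidHom_eq_coe,
        AddMonoidHom.coe_coe, LinearMap.mul_apply', hEr]
      erw [LinearMap.mem_ker, map_sub, TensorProduct.lift.tmul, TensorProduct.lift.tmul]
      change ((E (x * (b : A)) : B) : A) * y - ((E x : B) : A) * ((b : A) * y) = 0
      rw [hEr]
      show ((E x * b : B) : A) * y - ((E x : B) : A) * ((b : A) * y) = 0
      push_cast
      rw [mul_assoc, sub_self])

lemma psiB_tmulB (E : A →+ B) (hEr : ∀ (a : A) (b : B), E (a * (b : A)) = E a * b)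
    (x y : A) : psiB B E hEr (tmulB B x y) = (E x : A) * y := by
  rw [psiB, tmulB]
  erw [Submodule.liftQ_apply]
  erw [TensorProduct.lift.tmul]
  rfl

lemma tmulB_zero_right (x : A) : tmulB B x (0 : A) = 0 := by
  simp [tmulB, TensorProduct.tmul_zero, Submodule.Quotient.mk_zero]

lemma tmulB_add_right (x c d : A) :
    tmulB B x (c + d) = tmulB B x c + tmulB B x d := by
  simp [tmulB, TensorProduct.tmul_add, Submodule.Quotient.mk_add]

lemma TensorOverSub.inductionOn {B : Subring A} {motive : TensorOverSub B → Prop}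
    (z : TensorOverSub B) (zero : motive 0) (tmul : ∀ x y : A, motive (tmulB B x y))
    (add : ∀ z w, motive z → motive w → motive (z + w)) : motive z := by
  obtain ⟨w, rfl⟩ := Submodule.Quotient.mk_surjective _ z
  induction w using TensorProduct.induction_on with
  | zero => rw [Submodule.Quotient.mk_zero]; exact zero
  | tmul x y => exact tmul x y
  | add a b ha hb => rw [Submodule.Quotient.mk_add]; exact add _ _ ha hb

lemma lmulB_lmulB (a a' : A) (z : TensorOverSub B) :
    lmulB B a (lmulB B a' z) = lmulB B (a * a') z := by
  induction z using TensorOverSub.inductionOn with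
  | zero => simp
  | tmul x y => simp [lmulB_tmulB, mul_assoc]
  | add z w hz hw => simp [map_add, hz, hw]

lemma lmulB_rmulB_comm (a a' : A) (z : TensorOverSub B) :
    lmulB B a (rmulB B a' z) = rmulB B a' (lmulB B a z) := by
  induction z using TensorOverSub.inductionOn with
  | zero => simp
  | tmul x y => simp [lmulB_tmulB, rmulB_tmulB]
  | add z w hz hw => simp [map_add, hz, hw]

lemma mulMapB_lmulB (a : A) (z : TensorOverSub B) :
    mulMapB B (lmulB B a z) = a * mulMapB B z := by
  induction z using TensorOverSub.inductionOn with
  | zero => simp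
  | tmul x y => simp [lmulB_tmulB, mulMapB_tmulB, mul_assoc]
  | add z w hz hw => simp [map_add, hz, hw, mul_add]

lemma psiB_rmulB (E : A →+ B) (hEr : ∀ (a : A) (b : B), E (a * (b : A)) = E a * b)
    (a : A) (z : TensorOverSub B) :
    psiB B E hEr (rmulB B a z) = psiB B E hEr z * a := by
  induction z using TensorOverSub.inductionOn with
  | zero => simp
  | tmul x y => simp [rmulB_tmulB, psiB_tmulB, mul_assoc]
  | add z w hz hw => simp [map_add, hz, hw, add_mul]

lemma psiB_lmulB_coe (E : A →+ B) (hEr : ∀ (a : A) (b : B), E (a * (b : A)) = E a * b)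
    (hEl : ∀ (b : B) (a : A), E ((b : A) * a) = b * E a)
    (b : B) (z : TensorOverSub B) :
    psiB B E hEr (lmulB B (b : A) z) = (b : A) * psiB B E hEr z := by
  induction z using TensorOverSub.inductionOn with
  | zero => simp
  | tmul x y =>
      rw [lmulB_tmulB, psiB_tmulB, psiB_tmulB, hEl]
      push_cast
      rw [mul_assoc]
  | add z w hz hw => simp [map_add, hz, hw, mul_add]

end SepAux

/-- For a Frobenius extension `A ⊇ B` with Frobenius homomorphism `E`,
dual bases `xᵢ, yᵢ`, and invertible `E`-index `Σᵢ xᵢyᵢ` (with inverse `u ∈ Z(A)`):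
if the centralizer `A^B` equals `Z(A)`, then `u · Σᵢ xᵢ ⊗_B yᵢ` is the unique
separability element of `A` over `B`. -/
theorem uniquely_separable_frobenius {A : Type*} [Ring A] (B : Subring A)
    (E : A →+ B)
    (hEl : ∀ (b : B) (a : A), E ((b : A) * a) = b * E a)
    (hEr : ∀ (a : A) (b : B), E (a * (b : A)) = E a * b)
    (n : ℕ) (x y : Fin n → A)
    (hdual₁ : ∀ a : A, a = ∑ i, ((E (a * x i) : A) * y i))
    (hdual₂ : ∀ a : A, a = ∑ i, (x i * (E (y i * a) : A)))
    (u : A) (hu : u ∈ Subring.center A)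
    (huinv₁ : u * (∑ i, x i * y i) = 1) (huinv₂ : (∑ i, x i * y i) * u = 1)
    (hcent : Subring.centralizer (B : Set A) = Subring.center A) :
    (∀ a : A, lmulB B a (lmulB B u (∑ i, tmulB B (x i) (y i))) =
        rmulB B a (lmulB B u (∑ i, tmulB B (x i) (y i)))) ∧
    mulMapB B (lmulB B u (∑ i, tmulB B (x i) (y i))) = 1 ∧
    ∀ e' : TensorOverSub B,
      (∀ a : A, lmulB B a e' = rmulB B a e') → mulMapB B e' = 1 →
        e' = lmulB B u (∑ i, tmulB B (x i) (y i)) := by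
  set T : TensorOverSub B := ∑ i, tmulB B (x i) (y i) with hT
  have hμT : mulMapB B T = ∑ i, x i * y i := by
    rw [hT, map_sum]; simp [mulMapB_tmulB]
  -- Casimir property of T
  have hcas : ∀ a : A, lmulB B a T = rmulB B a T := by
    intro a
    rw [hT, map_sum, map_sum]
    calc ∑ i, lmulB B a (tmulB B (x i) (y i))
        = ∑ i, ∑ j, tmulB B (x j) ((E (y j * (a * x i)) : A) * y i) := by
          refine Finset.sum_congr rfl fun i _ => ?_
          rw [lmulB_tmulB]
          conv_lhs => rw [hdual₂ (a * x i)]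
          rw [tmulB_sum_left]
          exact Finset.sum_congr rfl fun j _ => tmulB_rel B _ _ _
      _ = ∑ j, tmulB B (x j) (y j * a) := by
          rw [Finset.sum_comm]
          refine Finset.sum_congr rfl fun j _ => ?_
          rw [← tmulB_sum_right]
          congr 1
          have h := hdual₁ (y j * a)
          simp only [mul_assoc] at h ⊢
          exact h.symm
      _ = ∑ j, rmulB B a (tmulB B (x j) (y j)) :=
          Finset.sum_congr rfl fun j _ => (rmulB_tmulB B a _ _).symm
  have hua : ∀ a : A, a * u = u * a := fun a =>
    (Subring.mem_center_iff.mp hu a)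
  -- existence: Casimir property of u • T
  refine ⟨?_, ?_, ?_⟩
  · intro a
    rw [lmulB_lmulB, hua a, ← lmulB_lmulB, hcas a, lmulB_rmulB_comm]
  · rw [mulMapB_lmulB, hμT, huinv₁]
  -- uniqueness
  · intro e' hC hμ
    have hrec : ∀ z : TensorOverSub B,
        (∑ i, tmulB B (x i) (psiB B E hEr (lmulB B (y i) z))) = z := by
      intro z
      induction z using TensorOverSub.inductionOn with
      | zero => simp [tmulB_zero_right]
      | tmul x0 y0 =>
          calc ∑ i, tmulB B (x i) (psiB B E hEr (lmulB B (y i) (tmulB B x0 y0)))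
              = ∑ i, tmulB B (x i * (E (y i * x0) : A)) y0 := by
                refine Finset.sum_congr rfl fun i _ => ?_
                rw [lmulB_tmulB, psiB_tmulB, ← tmulB_rel]
            _ = tmulB B (∑ i, x i * (E (y i * x0) : A)) y0 :=
                (tmulB_sum_left B _ _ _).symm
            _ = tmulB B x0 y0 := by rw [← hdual₂ x0]
      | add z w hz hw =>
          simp only [map_add, tmulB_add_right, Finset.sum_add_distrib, hz, hw]
    set r : A := psiB B E hEr e' with hr
    -- r centralizes B, hence is central
    have hrB : r ∈ Subring.centralizer (B : Set A) := by
      refine Subring.mem_centralizer_iff.mpr fun b hb => ?_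
      lift b to B using hb
      rw [hr, ← psiB_lmulB_coe B E hEr hEl b e', hC, psiB_rmulB]
    have hrc : ∀ a : A, a * r = r * a := fun a =>
      Subring.mem_center_iff.mp (hcent ▸ hrB) a
    -- e' = r • T
    have he' : e' = lmulB B r T := by
      calc e' = ∑ i, tmulB B (x i) (psiB B E hEr (lmulB B (y i) e')) := (hrec e').symm
        _ = ∑ i, tmulB B (x i) (r * y i) := by
            refine Finset.sum_congr rfl fun i _ => ?_
            rw [hC, psiB_rmulB, ← hr, ← hrc]
        _ = ∑ i, rmulB B r (tmulB B (x i) (y i)) := by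
            refine Finset.sum_congr rfl fun i _ => ?_
            rw [rmulB_tmulB, hrc]
        _ = rmulB B r T := by rw [hT, map_sum]
        _ = lmulB B r T := (hcas r).symm
    have h1 : r * (∑ i, x i * y i) = 1 := by
      rw [← hμT, ← mulMapB_lmulB, ← he', hμ]
    have hru : r = u := by
      have := congrArg (· * u) h1
      simpa [mul_assoc, huinv₂] using this
    rw [he', hru]
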